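/- Suppose ω : {0,…,p−2} → ℤ≥0 is antipalindromic, with range {0,1,…,ζ}. Then the two maps Γ** → ℤ^ℕ given by x ↦ (φ_ω(S^j x))_{j≥0} and x ↦ (ζ − φ_ω(S^{−j} x))_{j≥0} have the same distribution, i.e., the pushforwards of λ under these two maps are equal as measures on ℤ^ℕ. -/

import Mathlib

open MeasureTheory
open scoped NNReal ENNReal

namespace Chacon

/-- The space of digit sequences with digits in `{0, …, p-1}`. -/
def Gamma (p : ℕ) : Set (ℕ → ℕ) := {x | ∀ i, x i < p}

/-- `Γ*`: sequences with digits `< p` having infinitely many coordinates `≠ p - 1`. -/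
def GammaStar (p : ℕ) : Set (ℕ → ℕ) :=
  {x | (∀ i, x i < p) ∧ {i | x i ≠ p - 1}.Infinite}

/-- The least index `i` with `x i ≠ p - 1`. -/
noncomputable def firstNot (p : ℕ) (x : ℕ → ℕ) : ℕ :=
  sInf {i | x i ≠ p - 1}

/-- `φ(x) = x_i` where `i` is the least index with `x_i ≠ p - 1`. -/
noncomputable def phi (p : ℕ) (x : ℕ → ℕ) : ℕ :=
  x (firstNot p x)

/-- The odometer `S` (addition of `1` with carry): the initial run of digits
`p - 1` is replaced by zeros, and the first digit `≠ p - 1` is increased by one. -/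
noncomputable def odo (p : ℕ) (x : ℕ → ℕ) : ℕ → ℕ :=
  fun i =>
    if i < firstNot p x then 0
    else if i = firstNot p x then x i + 1
    else x i

/-- `φ^(m)(x) = ∑_{j=0}^{m-1} φ(S^j x)`. -/
noncomputable def phiSum (p m : ℕ) (x : ℕ → ℕ) : ℕ :=
  ∑ j ∈ Finset.range m, phi p ((odo p)^[j] x)

/-- The base-`p` digit sequence of a real number `u`. -/
noncomputable def digitsOf (p : ℕ) (u : ℝ) : ℕ → ℕ :=
  fun i => (⌊u * (p : ℝ) ^ (i + 1)⌋).toNat % p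

/-- `λ`: the product probability measure on digit sequences under which the
coordinates are i.i.d., uniformly distributed in `{0, …, p-1}`; it is realized
concretely as the distribution of the base-`p` digit sequence of a uniformly
distributed random point of `[0,1)`. -/
noncomputable def lam (p : ℕ) : Measure (ℕ → ℕ) :=
  Measure.map (digitsOf p) (volume.restrict (Set.Ico (0 : ℝ) 1))

/-- `π_m(j) = λ({x : φ^(m)(x) = j})`. -/
noncomputable def pim (p m j : ℕ) : ℝ≥0∞ :=
  lam p {x | phiSum p m x = j}

/-- `P_m^p(t) = ∑_{j ≥ 0} π_m(j) t^j`, a real polynomial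
(the sum is over `0 ≤ j ≤ m (p-2)` since `0 ≤ φ^(m) ≤ m (p-2)` a.s.). -/
noncomputable def P (p m : ℕ) (t : ℝ) : ℝ :=
  ∑ j ∈ Finset.range (m * (p - 2) + 1), (pim p m j).toReal * t ^ j

/-- The `n`-th triangular number `Δ_n = n (n+1) / 2`. -/
def tri (n : ℕ) : ℕ := n * (n + 1) / 2

/-- The degree `D_m` of `P_m^p`: the largest `j` with `π_m(j) ≠ 0`. -/
noncomputable def D (p m : ℕ) : ℕ := sSup {j | pim p m j ≠ 0}

/-- The lower degree `d_m` of `P_m^p`: the least `j` with `π_m(j) ≠ 0`. -/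
noncomputable def d (p m : ℕ) : ℕ := sInf {j | pim p m j ≠ 0}


/-- `φ_ω(x) = ω(x_i)` where `i` is the least index with `x_i ≠ p - 1`. -/
noncomputable def phiOmega (p : ℕ) (ω : ℕ → ℕ) (x : ℕ → ℕ) : ℕ :=
  ω (x (firstNot p x))

/-- `φ_ω^(m)(x) = ∑_{j=0}^{m-1} φ_ω(S^j x)`. -/
noncomputable def phiOmegaSum (p : ℕ) (ω : ℕ → ℕ) (m : ℕ) (x : ℕ → ℕ) : ℕ :=
  ∑ j ∈ Finset.range m, phiOmega p ω ((odo p)^[j] x)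

/-- `π_m^ω(j) = λ({x : φ_ω^(m)(x) = j})`. -/
noncomputable def pimOmega (p : ℕ) (ω : ℕ → ℕ) (m j : ℕ) : ℝ≥0∞ :=
  lam p {x | phiOmegaSum p ω m x = j}

/-- `ω : {0, …, p-2} → ℤ≥0` is antipalindromic with range exactly `{0, 1, …, ζ}`
and `ω j = ζ - ω (p - 2 - j)` for all `0 ≤ j ≤ p - 2`. -/
def Antipalindromic (p ζ : ℕ) (ω : ℕ → ℕ) : Prop :=
  (∀ j, j ≤ p - 2 → ω j ≤ ζ) ∧
  (∀ v, v ≤ ζ → ∃ j, j ≤ p - 2 ∧ ω j = v) ∧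
  (∀ j, j ≤ p - 2 → ω j + ω (p - 2 - j) = ζ)

/-- `Γ**`: sequences with digits `< p` having infinitely many coordinates `≠ p - 1`
and infinitely many coordinates `≠ 0`. -/
def GammaStarStar (p : ℕ) : Set (ℕ → ℕ) :=
  {x | (∀ i, x i < p) ∧ {i | x i ≠ p - 1}.Infinite ∧ {i | x i ≠ 0}.Infinite}

/-- The least index `i` with `x i ≠ 0`. -/
noncomputable def firstNotZero (p : ℕ) (x : ℕ → ℕ) : ℕ := sInf {i | x i ≠ 0}

/-- The inverse odometer `S⁻¹` (subtraction of `1` with borrow): the initial run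
of zeros is replaced by `p-1`'s and the first digit `≠ 0` is decreased by one. -/
noncomputable def odoInv (p : ℕ) (x : ℕ → ℕ) : ℕ → ℕ :=
  fun i =>
    if i < firstNotZero p x then p - 1
    else if i = firstNotZero p x then x i - 1
    else x i

section Proofs1
variable {p : ℕ}

/-- helper: identify a digit from a congruence. -/
lemma toNat_mod_eq (hp : 0 < p) {M : ℤ} (hM : 0 ≤ M) {t : ℕ} (ht : t < p)
    (hd : (p : ℤ) ∣ M - t) : M.toNat % p = t := by
  have h1 : (M.toNat : ℤ) = M := Int.toNat_of_nonneg hM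
  have h2 : ((M.toNat % p : ℕ) : ℤ) = (M : ℤ) % p := by
    push_cast [h1]; rfl
  have h3 : (M : ℤ) % p = t := by
    obtain ⟨c, hc⟩ := hd
    have : M = (t : ℤ) + p * c := by linarith
    rw [this, Int.add_mul_emod_self_left]
    exact Int.emod_eq_of_lt (by positivity) (by exact_mod_cast ht)
  exact_mod_cast h2.trans h3

lemma digit_lt (hp : 0 < p) (u : ℝ) (i : ℕ) : digitsOf p u i < p :=
  Nat.mod_lt _ hp

lemma digit_mod (u : ℝ) (hu : 0 ≤ u) (i : ℕ) :
    (p : ℤ) ∣ ⌊u * (p : ℝ) ^ (i + 1)⌋ - digitsOf p u i := by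
  set M := ⌊u * (p : ℝ) ^ (i + 1)⌋ with hM
  have hM0 : 0 ≤ M := Int.floor_nonneg.2 (by positivity)
  have h1 : (M.toNat : ℤ) = M := Int.toNat_of_nonneg hM0
  have : (digitsOf p u i : ℤ) = M % p := by
    show ((M.toNat % p : ℕ) : ℤ) = M % p
    push_cast [h1]; rfl
  rw [this]
  exact Int.dvd_self_sub_of_emod_eq rfl

/-- floor recursion -/
lemma floor_succ (hp : 0 < p) (u : ℝ) (hu : 0 ≤ u) (n : ℕ) :
    ⌊u * (p : ℝ) ^ (n + 1)⌋ = p * ⌊u * (p : ℝ) ^ n⌋ + digitsOf p u n := by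
  set A := ⌊u * (p : ℝ) ^ n⌋ with hA
  set B := ⌊u * (p : ℝ) ^ (n + 1)⌋ with hB
  have hq : (0 : ℝ) < p := by exact_mod_cast hp
  have hup : u * (p:ℝ) ^ (n+1) = (u * (p:ℝ)^n) * p := by ring
  have h1 : (p : ℝ) * A ≤ u * (p:ℝ)^(n+1) := by
    rw [hup]
    have := Int.floor_le (u * (p:ℝ)^n)
    nlinarith
  have h2 : u * (p:ℝ)^(n+1) < (p:ℝ) * A + p := by
    rw [hup]
    have := Int.lt_floor_add_one (u * (p:ℝ)^n)
    nlinarith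
  have hBl : (p:ℤ) * A ≤ B := by
    apply Int.le_floor.2; push_cast; exact h1
  have hBu : B < (p:ℤ) * A + p := by
    have := Int.floor_le (u * (p:ℝ)^(n+1))
    have : (B : ℝ) < (p:ℝ) * A + p := lt_of_le_of_lt this h2
    exact_mod_cast this
  have hB0 : 0 ≤ B := Int.floor_nonneg.2 (by positivity)
  have hd : digitsOf p u n = (B - p * A).toNat := by
    apply toNat_mod_eq hp hB0 (t := (B - p*A).toNat)
    · have : ((B - p*A).toNat : ℤ) = B - p*A := Int.toNat_of_nonneg (by omega)
      omega
    · have : ((B - p*A).toNat : ℤ) = B - p*A := Int.toNat_of_nonneg (by omega)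
      refine ⟨A, ?_⟩; omega
  have : ((B - p*A).toNat : ℤ) = B - p*A := Int.toNat_of_nonneg (by omega)
  rw [hd]; omega


lemma not_all_pm1 (hp : 2 ≤ p) (u : ℝ) (hu : 0 ≤ u) (N : ℕ)
    (h : ∀ i, N ≤ i → digitsOf p u i = p - 1) : False := by
  have hp0 : 0 < p := by omega
  have hq1 : (1:ℝ) < p := by exact_mod_cast Nat.one_lt_cast.mpr (by omega)
  have hpm : ((p - 1 : ℕ) : ℤ) = (p:ℤ) - 1 := by omega
  have key : ∀ j : ℕ, ⌊u * (p:ℝ)^(N+j)⌋ + 1 = p ^ j * (⌊u * (p:ℝ)^N⌋ + 1) := by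
    intro j
    induction j with
    | zero => simp
    | succ j ih =>
      have h1 := floor_succ hp0 u hu (N+j)
      rw [h (N+j) (by omega), hpm] at h1
      rw [show N + (j+1) = (N+j)+1 by ring]
      linear_combination h1 + (p:ℤ) * ih
  set A := ⌊u * (p:ℝ)^N⌋ with hA
  have hδ : (0:ℝ) < (A:ℝ) + 1 - u * (p:ℝ)^N := by
    have := Int.lt_floor_add_one (u * (p:ℝ)^N); push_cast; linarith
  obtain ⟨j, hj⟩ := pow_unbounded_of_one_lt (((A:ℝ) + 1 - u * (p:ℝ)^N)⁻¹) hq1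
  have hpj : (0:ℝ) < (p:ℝ)^j := by positivity
  have hji : ((p:ℝ)^j)⁻¹ < (A:ℝ) + 1 - u * (p:ℝ)^N := by
    rw [inv_lt_comm₀ hpj hδ]; exact hj
  have h3 : (⌊u * (p:ℝ)^(N+j)⌋ : ℝ) = (p:ℝ)^j * ((A:ℝ)+1) - 1 := by
    have h3' := congrArg (fun z : ℤ => (z:ℝ)) (key j); push_cast at h3'; linarith
  have hfl : ((p:ℝ)^j * ((A:ℝ)+1) - 1 : ℝ) ≤ u * (p:ℝ)^(N+j) := by
    have h2 := Int.floor_le (u * (p:ℝ)^(N+j)); linarith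
  have hpow : u * (p:ℝ)^(N+j) = (u * (p:ℝ)^N) * (p:ℝ)^j := by rw [pow_add]; ring
  rw [hpow] at hfl
  nlinarith [mul_lt_mul_of_pos_right hji hpj, inv_mul_cancel₀ (ne_of_gt hpj)]

lemma all_zero_imp_int (hp : 2 ≤ p) (u : ℝ) (hu : 0 ≤ u) (N : ℕ)
    (h : ∀ i, N ≤ i → digitsOf p u i = 0) :
    u * (p:ℝ)^N = (⌊u * (p:ℝ)^N⌋ : ℝ) := by
  have hp0 : 0 < p := by omega
  have hq1 : (1:ℝ) < p := by exact_mod_cast Nat.one_lt_cast.mpr (by omega)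
  have key : ∀ j : ℕ, ⌊u * (p:ℝ)^(N+j)⌋ = p ^ j * ⌊u * (p:ℝ)^N⌋ := by
    intro j
    induction j with
    | zero => simp
    | succ j ih =>
      have h1 := floor_succ hp0 u hu (N+j)
      rw [h (N+j) (by omega)] at h1
      rw [show N + (j+1) = (N+j)+1 by ring]
      push_cast at h1
      linear_combination h1 + (p:ℤ) * ih
  set A := ⌊u * (p:ℝ)^N⌋ with hA
  by_contra hne
  have hfl := Int.floor_le (u * (p:ℝ)^N)
  have hδ : (0:ℝ) < u * (p:ℝ)^N - A := by
    rcases lt_or_eq_of_le hfl with h' | h'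
    · linarith
    · exact absurd h'.symm hne
  obtain ⟨j, hj⟩ := pow_unbounded_of_one_lt ((u * (p:ℝ)^N - A)⁻¹) hq1
  have hpj : (0:ℝ) < (p:ℝ)^j := by positivity
  have hji : ((p:ℝ)^j)⁻¹ < u * (p:ℝ)^N - A := by
    rw [inv_lt_comm₀ hpj hδ]; exact hj
  have h2 := Int.lt_floor_add_one (u * (p:ℝ)^(N+j))
  have h3 : (⌊u * (p:ℝ)^(N+j)⌋ : ℝ) = (p:ℝ)^j * (A:ℝ) := by
    have h3' := congrArg (fun z : ℤ => (z:ℝ)) (key j); push_cast at h3'; linarith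
  have hpow : u * (p:ℝ)^(N+j) = (u * (p:ℝ)^N) * (p:ℝ)^j := by rw [pow_add]; ring
  nlinarith [mul_lt_mul_of_pos_right hji hpj, inv_mul_cancel₀ (ne_of_gt hpj)]

end Proofs1

section Proofs3

def Rmap (p : ℕ) (x : ℕ → ℕ) : ℕ → ℕ := fun i => p - 1 - x i

noncomputable def Qmap (p : ℕ) (x : ℕ → ℕ) : ℕ → ℕ :=
  fun i => if i < firstNot p x then p - 1
    else if i = firstNot p x then p - 2 - x i else p - 1 - x i

variable {p : ℕ} (hp : 3 ≤ p)

lemma odo_apply (x : ℕ → ℕ) (i : ℕ) : odo p x i =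
    if i < firstNot p x then 0 else if i = firstNot p x then x i + 1 else x i := rfl

lemma odoInv_apply (x : ℕ → ℕ) (i : ℕ) : odoInv p x i =
    if i < firstNotZero p x then p - 1
    else if i = firstNotZero p x then x i - 1 else x i := rfl

lemma Qmap_apply (x : ℕ → ℕ) (i : ℕ) : Qmap p x i =
    if i < firstNot p x then p - 1
    else if i = firstNot p x then p - 2 - x i else p - 1 - x i := rfl

lemma firstNot_eq {x : ℕ → ℕ} {j : ℕ} (hj : x j ≠ p - 1)
    (hpre : ∀ i, i < j → x i = p - 1) : firstNot p x = j := by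
  have h1 : firstNot p x ≤ j := Nat.sInf_le hj
  rcases h1.lt_or_eq with h | h
  · exact absurd (hpre _ h) (Nat.sInf_mem (⟨j, hj⟩ : Set.Nonempty {i | x i ≠ p - 1}))
  · exact h

lemma firstNotZero_eq {x : ℕ → ℕ} {j : ℕ} (hj : x j ≠ 0)
    (hpre : ∀ i, i < j → x i = 0) : firstNotZero p x = j := by
  have h1 : firstNotZero p x ≤ j := Nat.sInf_le hj
  rcases h1.lt_or_eq with h | h
  · exact absurd (hpre _ h) (Nat.sInf_mem (⟨j, hj⟩ : Set.Nonempty {i | x i ≠ 0}))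
  · exact h

lemma firstNot_spec {x : ℕ → ℕ} (hx : {i | x i ≠ p - 1}.Nonempty) :
    x (firstNot p x) ≠ p - 1 ∧ ∀ i, i < firstNot p x → x i = p - 1 := by
  refine ⟨Nat.sInf_mem hx, fun i hi => ?_⟩
  have := Nat.notMem_of_lt_sInf hi
  simpa using this

lemma firstNotZero_spec {x : ℕ → ℕ} (hx : {i | x i ≠ 0}.Nonempty) :
    x (firstNotZero p x) ≠ 0 ∧ ∀ i, i < firstNotZero p x → x i = 0 := by
  refine ⟨Nat.sInf_mem hx, fun i hi => ?_⟩
  have := Nat.notMem_of_lt_sInf hi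
  simpa using this

include hp

lemma mem_gss_odo {x : ℕ → ℕ} (hx : x ∈ GammaStarStar p) : odo p x ∈ GammaStarStar p := by
  obtain ⟨hlt, hinf1, hinf2⟩ := hx
  obtain ⟨hxf, hpre⟩ := firstNot_spec (hx := hinf1.nonempty)
  refine ⟨fun i => ?_, ?_, ?_⟩
  · rw [odo_apply]
    split_ifs with h1 h2
    · omega
    · have := hlt i; subst h2; omega
    · exact hlt i
  · apply Set.Infinite.mono (s := {i | x i ≠ p - 1} \ Set.Iic (firstNot p x))
    · intro i hi
      simp only [Set.mem_diff, Set.mem_setOf_eq, Set.mem_Iic, not_le] at hi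
      have h : odo p x i = x i := by rw [odo_apply, if_neg (by omega), if_neg (by omega)]
      simpa [h] using hi.1
    · exact hinf1.diff (Set.finite_Iic _)
  · apply Set.Infinite.mono (s := {i | x i ≠ 0} \ Set.Iic (firstNot p x))
    · intro i hi
      simp only [Set.mem_diff, Set.mem_setOf_eq, Set.mem_Iic, not_le] at hi
      have h : odo p x i = x i := by rw [odo_apply, if_neg (by omega), if_neg (by omega)]
      simpa [h] using hi.1
    · exact hinf2.diff (Set.finite_Iic _)

lemma mem_gss_odoInv {x : ℕ → ℕ} (hx : x ∈ GammaStarStar p) :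
    odoInv p x ∈ GammaStarStar p := by
  obtain ⟨hlt, hinf1, hinf2⟩ := hx
  obtain ⟨hxg, hpre⟩ := firstNotZero_spec (p := p) (hx := hinf2.nonempty)
  refine ⟨fun i => ?_, ?_, ?_⟩
  · rw [odoInv_apply]
    split_ifs with h1 h2
    · omega
    · have := hlt i; omega
    · exact hlt i
  · apply Set.Infinite.mono (s := {i | x i ≠ p - 1} \ Set.Iic (firstNotZero p x))
    · intro i hi
      simp only [Set.mem_diff, Set.mem_setOf_eq, Set.mem_Iic, not_le] at hi
      have h : odoInv p x i = x i := by rw [odoInv_apply, if_neg (by omega), if_neg (by omega)]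
      simpa [h] using hi.1
    · exact hinf1.diff (Set.finite_Iic _)
  · apply Set.Infinite.mono (s := {i | x i ≠ 0} \ Set.Iic (firstNotZero p x))
    · intro i hi
      simp only [Set.mem_diff, Set.mem_setOf_eq, Set.mem_Iic, not_le] at hi
      have h : odoInv p x i = x i := by rw [odoInv_apply, if_neg (by omega), if_neg (by omega)]
      simpa [h] using hi.1
    · exact hinf2.diff (Set.finite_Iic _)

lemma firstNot_Qmap {x : ℕ → ℕ} (hlt : ∀ i, x i < p)
    (hne : {i | x i ≠ p - 1}.Nonempty) : firstNot p (Qmap p x) = firstNot p x := by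
  obtain ⟨hxf, hpre⟩ := firstNot_spec (hx := hne)
  apply firstNot_eq
  · rw [Qmap_apply, if_neg (lt_irrefl _), if_pos rfl]
    have := hlt (firstNot p x); omega
  · intro i hi; rw [Qmap_apply, if_pos hi]

lemma mem_gss_Qmap {x : ℕ → ℕ} (hx : x ∈ GammaStarStar p) :
    Qmap p x ∈ GammaStarStar p := by
  obtain ⟨hlt, hinf1, hinf2⟩ := hx
  refine ⟨fun i => ?_, ?_, ?_⟩
  · rw [Qmap_apply]; split_ifs <;> omega
  · apply Set.Infinite.mono (s := {i | x i ≠ 0} \ Set.Iic (firstNot p x))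
    · intro i hi
      simp only [Set.mem_diff, Set.mem_setOf_eq, Set.mem_Iic, not_le] at hi
      have h : Qmap p x i = p - 1 - x i := by
        rw [Qmap_apply, if_neg (by omega), if_neg (by omega)]
      have := hlt i
      simp only [Set.mem_setOf_eq, h]; omega
    · exact hinf2.diff (Set.finite_Iic _)
  · apply Set.Infinite.mono (s := {i | x i ≠ p - 1} \ Set.Iic (firstNot p x))
    · intro i hi
      simp only [Set.mem_diff, Set.mem_setOf_eq, Set.mem_Iic, not_le] at hi
      have h : Qmap p x i = p - 1 - x i := by
        rw [Qmap_apply, if_neg (by omega), if_neg (by omega)]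
      have := hlt i
      simp only [Set.mem_setOf_eq, h]; omega
    · exact hinf1.diff (Set.finite_Iic _)

lemma odo_Qmap {x : ℕ → ℕ} (hx : x ∈ GammaStarStar p) :
    odo p (Qmap p x) = Rmap p x := by
  obtain ⟨hlt, hinf1, hinf2⟩ := hx
  have hfq := firstNot_Qmap hp (fun i => hlt i) hinf1.nonempty
  obtain ⟨hxf, hpre⟩ := firstNot_spec (hx := hinf1.nonempty)
  funext i
  rw [odo_apply, hfq]
  show _ = p - 1 - x i
  by_cases h1 : i < firstNot p x
  · rw [if_pos h1, hpre i h1]; omega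
  · by_cases h2 : i = firstNot p x
    · rw [if_neg h1, if_pos h2, Qmap_apply, h2, if_neg (lt_irrefl _), if_pos rfl]
      have := hlt (firstNot p x); omega
    · rw [if_neg h1, if_neg h2, Qmap_apply, if_neg h1, if_neg h2]

lemma Qmap_odoInv {x : ℕ → ℕ} (hx : x ∈ GammaStarStar p) :
    Qmap p (odoInv p x) = Rmap p x := by
  obtain ⟨hlt, hinf1, hinf2⟩ := hx
  obtain ⟨hxg, hpre⟩ := firstNotZero_spec (p := p) (hx := hinf2.nonempty)
  have hfy : firstNot p (odoInv p x) = firstNotZero p x := by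
    apply firstNot_eq
    · rw [odoInv_apply, if_neg (lt_irrefl _), if_pos rfl]
      have := hlt (firstNotZero p x); omega
    · intro i hi; rw [odoInv_apply, if_pos hi]
  funext i
  rw [Qmap_apply, hfy]
  show _ = p - 1 - x i
  by_cases h1 : i < firstNotZero p x
  · rw [if_pos h1, hpre i h1]; omega
  · by_cases h2 : i = firstNotZero p x
    · rw [if_neg h1, if_pos h2, odoInv_apply, h2, if_neg (lt_irrefl _), if_pos rfl]
      have h3 := hlt (firstNotZero p x)
      have h4 : x (firstNotZero p x) ≠ 0 := hxg
      omega
    · rw [if_neg h1, if_neg h2, odoInv_apply, if_neg h1, if_neg h2]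

lemma mem_gss_odoInv_iter {x : ℕ → ℕ} (hx : x ∈ GammaStarStar p) (j : ℕ) :
    (odoInv p)^[j] x ∈ GammaStarStar p := by
  induction j with
  | zero => simpa using hx
  | succ j ih => rw [Function.iterate_succ_apply']; exact mem_gss_odoInv hp ih

lemma odo_iter_Qmap {x : ℕ → ℕ} (hx : x ∈ GammaStarStar p) (j : ℕ) :
    (odo p)^[j] (Qmap p x) = Qmap p ((odoInv p)^[j] x) := by
  induction j with
  | zero => simp
  | succ j ih =>
    have hmem := mem_gss_odoInv_iter hp hx j
    rw [Function.iterate_succ_apply', ih, odo_Qmap hp hmem,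
      Function.iterate_succ_apply', Qmap_odoInv hp hmem]

lemma phiOmega_Qmap {ζ : ℕ} {ω : ℕ → ℕ}
    (hω : ∀ j, j ≤ p - 2 → ω j + ω (p - 2 - j) = ζ)
    {x : ℕ → ℕ} (hx : x ∈ GammaStarStar p) :
    (phiOmega p ω (Qmap p x) : ℤ) = ζ - phiOmega p ω x := by
  obtain ⟨hlt, hinf1, hinf2⟩ := hx
  have hfq := firstNot_Qmap hp (fun i => hlt i) hinf1.nonempty
  obtain ⟨hxf, hpre⟩ := firstNot_spec (hx := hinf1.nonempty)
  have h1 : Qmap p x (firstNot p x) = p - 2 - x (firstNot p x) := by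
    rw [Qmap_apply, if_neg (lt_irrefl _), if_pos rfl]
  have hxle : x (firstNot p x) ≤ p - 2 := by have := hlt (firstNot p x); omega
  have h2 := hω (x (firstNot p x)) hxle
  simp only [phiOmega, hfq, h1]
  omega

lemma key_pointwise {ζ : ℕ} {ω : ℕ → ℕ}
    (hω : ∀ j, j ≤ p - 2 → ω j + ω (p - 2 - j) = ζ)
    {x : ℕ → ℕ} (hx : x ∈ GammaStarStar p) (j : ℕ) :
    (phiOmega p ω ((odo p)^[j] (Qmap p x)) : ℤ) =
      (ζ : ℤ) - phiOmega p ω ((odoInv p)^[j] x) := by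
  rw [odo_iter_Qmap hp hx j]
  exact phiOmega_Qmap hp hω (mem_gss_odoInv_iter hp hx j)


end Proofs3

section Proofs4

noncomputable def aseq (p k : ℕ) : ℝ := 1 - ((p : ℝ) ^ k)⁻¹
noncomputable def kk (p : ℕ) (u : ℝ) : ℕ := sInf {k | u < aseq p (k + 1)}
noncomputable def gmap (p : ℕ) (u : ℝ) : ℝ := aseq p (kk p u) + aseq p (kk p u + 1) - u
def Good (p : ℕ) (u : ℝ) : Prop :=
  0 < u ∧ u < 1 ∧ ∀ (n : ℕ) (m : ℤ), u * (p : ℝ) ^ n ≠ (m : ℝ)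

variable {p : ℕ}

lemma aseq_mono (hp : 2 ≤ p) {j k : ℕ} (h : j ≤ k) : aseq p j ≤ aseq p k := by
  have h1 : (1:ℝ) ≤ p := by exact_mod_cast Nat.one_le_cast.mpr (by omega)
  have h2 : (p:ℝ)^j ≤ (p:ℝ)^k := pow_le_pow_right₀ h1 h
  have h3 : (0:ℝ) < (p:ℝ)^j := by positivity
  have := inv_anti₀ h3 h2
  unfold aseq; linarith

lemma aseq_nonneg (hp : 2 ≤ p) (k : ℕ) : 0 ≤ aseq p k := by
  have h1 : (1:ℝ) ≤ p := by exact_mod_cast Nat.one_le_cast.mpr (by omega)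
  have h2 : (1:ℝ) ≤ (p:ℝ)^k := one_le_pow₀ h1
  have h3 : ((p:ℝ)^k)⁻¹ ≤ 1 := by rw [inv_le_one_iff₀]; right; exact h2
  unfold aseq; linarith

lemma aseq_lt_one (hp : 2 ≤ p) (k : ℕ) : aseq p k < 1 := by
  have h3 : (0:ℝ) < ((p:ℝ)^k)⁻¹ := by positivity
  unfold aseq; linarith

lemma kk_mem_Ico (hp : 2 ≤ p) {u : ℝ} (hu : 0 ≤ u) (hu1 : u < 1) :
    aseq p (kk p u) ≤ u ∧ u < aseq p (kk p u + 1) := by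
  have h1 : (1:ℝ) < p := by exact_mod_cast Nat.one_lt_cast.mpr (by omega)
  have hne : ∃ k, u < aseq p (k + 1) := by
    obtain ⟨k, hk⟩ := pow_unbounded_of_one_lt ((1 - u)⁻¹) h1
    refine ⟨k, ?_⟩
    have hδ : (0:ℝ) < 1 - u := by linarith
    have hk1 : ((p:ℝ)^(k+1))⁻¹ < 1 - u := by
      have hle : (p:ℝ)^k ≤ (p:ℝ)^(k+1) := pow_le_pow_right₀ (le_of_lt h1) (by omega)
      have h5 : (1-u)⁻¹ < (p:ℝ)^(k+1) := lt_of_lt_of_le hk hle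
      rw [inv_lt_comm₀ (by positivity) hδ]
      exact h5
    unfold aseq; linarith
  have hmem : u < aseq p (kk p u + 1) := Nat.sInf_mem hne
  refine ⟨?_, hmem⟩
  rcases Nat.eq_zero_or_pos (kk p u) with h | h
  · rw [h]; unfold aseq; simp; linarith
  · obtain ⟨m, hm⟩ : ∃ m, kk p u = m + 1 := ⟨kk p u - 1, by omega⟩
    have hmlt : m < kk p u := by omega
    have hnm := Nat.notMem_of_lt_sInf (s := {k | u < aseq p (k + 1)}) hmlt
    simp only [Set.mem_setOf_eq, not_lt] at hnm
    rw [hm]; exact hnm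

lemma kk_eq (hp : 2 ≤ p) {u : ℝ} {k : ℕ} (h1 : aseq p k ≤ u) (h2 : u < aseq p (k + 1)) :
    kk p u = k := by
  have hle : kk p u ≤ k := Nat.sInf_le h2
  rcases hle.lt_or_eq with h | h
  · exfalso
    have hmem : u < aseq p (kk p u + 1) :=
      Nat.sInf_mem (⟨k, h2⟩ : Set.Nonempty {k | u < aseq p (k + 1)})
    have : aseq p (kk p u + 1) ≤ aseq p k := aseq_mono hp (by omega)
    linarith
  · exact h

section digits
variable (hp : 2 ≤ p) {u : ℝ} {k : ℕ}
  (hu : 0 ≤ u) (h1 : aseq p k ≤ u) (h2 : u < aseq p (k + 1))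
include hp h1 h2

lemma floor_lt_k {i : ℕ} (hi : i < k) : ⌊u * (p:ℝ)^(i+1)⌋ = (p:ℤ)^(i+1) - 1 := by
  have hq1 : (1:ℝ) ≤ p := by exact_mod_cast Nat.one_le_cast.mpr (by omega)
  have hpik : (p:ℝ)^(i+1) ≤ (p:ℝ)^k := pow_le_pow_right₀ hq1 (by omega)
  have hpi : (0:ℝ) < (p:ℝ)^(i+1) := by positivity
  have hpk : (0:ℝ) < (p:ℝ)^k := by positivity
  rw [Int.floor_eq_iff]
  constructor
  · push_cast
    have e1 : aseq p k * (p:ℝ)^(i+1) = (p:ℝ)^(i+1) - (p:ℝ)^(i+1) * ((p:ℝ)^k)⁻¹ := by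
      unfold aseq; ring
    have e2 : (p:ℝ)^(i+1) * ((p:ℝ)^k)⁻¹ ≤ 1 := by
      rw [← div_eq_mul_inv, div_le_one hpk]; exact hpik
    have e3 : aseq p k * (p:ℝ)^(i+1) ≤ u * (p:ℝ)^(i+1) :=
      mul_le_mul_of_nonneg_right h1 (le_of_lt hpi)
    linarith
  · push_cast
    have e4 : u < 1 := lt_trans h2 (aseq_lt_one hp _)
    nlinarith

include hu

lemma dig_lt_k {i : ℕ} (hi : i < k) : digitsOf p u i = p - 1 := by
  have hf := floor_lt_k hp h1 h2 hi
  show (⌊u * (p:ℝ)^(i+1)⌋).toNat % p = p - 1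
  rw [hf]
  have hone : (1:ℤ) ≤ (p:ℤ)^(i+1) :=
    one_le_pow₀ (by exact_mod_cast Nat.one_le_cast.mpr (by omega) : (1:ℤ) ≤ (p:ℤ))
  apply toNat_mod_eq (by omega)
  · omega
  · omega
  · have hc : ((p - 1 : ℕ) : ℤ) = (p:ℤ) - 1 := by omega
    rw [hc]
    have he : (p:ℤ)^(i+1) - 1 - ((p:ℤ) - 1) = (p:ℤ)^(i+1) - (p:ℤ) := by ring
    rw [he]
    exact dvd_sub (dvd_pow_self _ (by omega)) dvd_rfl

omit hu in
lemma floor_at_k :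
    (p:ℤ)^(k+1) - p ≤ ⌊u * (p:ℝ)^(k+1)⌋ ∧ ⌊u * (p:ℝ)^(k+1)⌋ ≤ (p:ℤ)^(k+1) - 2 := by
  have hq1 : (1:ℝ) ≤ p := by exact_mod_cast Nat.one_le_cast.mpr (by omega)
  have hpk : (0:ℝ) < (p:ℝ)^k := by positivity
  have hpk1 : (0:ℝ) < (p:ℝ)^(k+1) := by positivity
  have hps : (p:ℝ)^(k+1) = (p:ℝ)^k * p := pow_succ _ _
  have e1 : aseq p k * (p:ℝ)^(k+1) = (p:ℝ)^(k+1) - (p:ℝ) := by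
    unfold aseq; rw [hps]; field_simp
  have e2 : aseq p (k+1) * (p:ℝ)^(k+1) = (p:ℝ)^(k+1) - 1 := by
    unfold aseq; field_simp
  constructor
  · apply Int.le_floor.2
    push_cast
    have := mul_le_mul_of_nonneg_right h1 (le_of_lt hpk1)
    linarith
  · have h3 : u * (p:ℝ)^(k+1) < (p:ℝ)^(k+1) - 1 := by
      have := mul_lt_mul_of_pos_right h2 hpk1
      linarith
    have h4 : ⌊u * (p:ℝ)^(k+1)⌋ < (p:ℤ)^(k+1) - 1 := by
      apply Int.floor_lt.2; push_cast; linarith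
    omega

lemma dig_at_k : digitsOf p u k ≠ p - 1 := by
  obtain ⟨hl, hr⟩ := floor_at_k hp h1 h2
  have hd := digit_mod (p := p) u hu k
  have hdl := digit_lt (p := p) (by omega) u k
  intro hcon
  rw [hcon] at hd
  have hc : ((p - 1 : ℕ) : ℤ) = (p:ℤ) - 1 := by omega
  rw [hc] at hd
  have h2' : (p:ℤ) ∣ (p:ℤ)^(k+1) := dvd_pow_self _ (by omega)
  have h3 : (p:ℤ) ∣ ((p:ℤ)^(k+1) - 1 - ⌊u * (p:ℝ)^(k+1)⌋) := by
    have h4 := dvd_sub h2' (Dvd.dvd.add hd dvd_rfl)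
    convert h4 using 1; exacts [rfl, by ring]
  have h4 := Int.le_of_dvd (by omega) h3
  have hpz : (2:ℤ) ≤ p := by exact_mod_cast hp
  omega

lemma firstNot_digits : firstNot p (digitsOf p u) = k :=
  firstNot_eq (dig_at_k hp hu h1 h2) (fun i hi => dig_lt_k hp hu h1 h2 hi)

end digits

lemma gmap_digits (hp : 3 ≤ p) {u : ℝ} (hG : Good p u) :
    digitsOf p (gmap p u) = Qmap p (digitsOf p u) := by
  obtain ⟨hu0, hu1, hirr⟩ := hG
  have hp2 : 2 ≤ p := by omega
  have hq1 : (1:ℝ) ≤ p := by exact_mod_cast Nat.one_le_cast.mpr (by omega)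
  obtain ⟨hk1, hk2⟩ := kk_mem_Ico hp2 (le_of_lt hu0) hu1
  have hane : aseq p (kk p u) < u := by
    rcases hk1.lt_or_eq with h | h
    · exact h
    · exfalso
      set K := kk p u with hK
      apply hirr K ((p:ℤ)^K - 1)
      have hpk : (0:ℝ) < (p:ℝ)^K := by positivity
      rw [← h]
      show (1 - ((p:ℝ)^K)⁻¹) * (p:ℝ)^K = _
      push_cast
      field_simp
  have hfn : firstNot p (digitsOf p u) = kk p u :=
    firstNot_digits hp2 (le_of_lt hu0) hk1 hk2
  have hv : gmap p u = aseq p (kk p u) + aseq p (kk p u + 1) - u := rfl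
  have hv1 : aseq p (kk p u) ≤ gmap p u := by rw [hv]; linarith
  have hv2 : gmap p u < aseq p (kk p u + 1) := by rw [hv]; linarith
  have hv0 : 0 ≤ gmap p u := le_trans (aseq_nonneg hp2 _) hv1
  -- the common floor computation for i ≥ k
  have key : ∀ i : ℕ, kk p u ≤ i →
      ⌊gmap p u * (p:ℝ)^(i+1)⌋ =
        2*(p:ℤ)^(i+1) - (p:ℤ)^(i+1-kk p u) - (p:ℤ)^(i-kk p u) - ⌊u * (p:ℝ)^(i+1)⌋ - 1 := by
    intro i hik
    have e1 : (p:ℝ)^(i+1) = (p:ℝ)^(i+1-kk p u) * (p:ℝ)^(kk p u) := by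
      rw [← pow_add]; congr 1; omega
    have e2 : (p:ℝ)^(i+1) = (p:ℝ)^(i-kk p u) * (p:ℝ)^(kk p u+1) := by
      rw [← pow_add]; congr 1; omega
    have hpk : (0:ℝ) < (p:ℝ)^(kk p u) := by positivity
    have hpk1 : (0:ℝ) < (p:ℝ)^(kk p u+1) := by positivity
    have f1 : (p:ℝ)^(i+1) * ((p:ℝ)^(kk p u))⁻¹ = (p:ℝ)^(i+1-kk p u) := by
      rw [e1]; field_simp
    have f2 : (p:ℝ)^(i+1) * ((p:ℝ)^(kk p u+1))⁻¹ = (p:ℝ)^(i-kk p u) := by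
      rw [e2]; field_simp
    have hNr : ((2*(p:ℤ)^(i+1) - (p:ℤ)^(i+1-kk p u) - (p:ℤ)^(i-kk p u) : ℤ) : ℝ)
        = (aseq p (kk p u) + aseq p (kk p u + 1)) * (p:ℝ)^(i+1) := by
      unfold aseq
      push_cast
      nlinarith [f1, f2]
    have hMu0 : (0:ℤ) ≤ ⌊u * (p:ℝ)^(i+1)⌋ := Int.floor_nonneg.2 (by positivity)
    have hstrict : ((⌊u * (p:ℝ)^(i+1)⌋ : ℤ) : ℝ) < u * (p:ℝ)^(i+1) := by
      rcases (Int.floor_le (u * (p:ℝ)^(i+1))).lt_or_eq with h | h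
      · exact h
      · exact absurd h.symm (hirr (i+1) _)
    have hub := Int.lt_floor_add_one (u * (p:ℝ)^(i+1))
    have hvp : gmap p u * (p:ℝ)^(i+1)
        = ((2*(p:ℤ)^(i+1) - (p:ℤ)^(i+1-kk p u) - (p:ℤ)^(i-kk p u) : ℤ) : ℝ)
          - u * (p:ℝ)^(i+1) := by
      rw [hNr, hv]; ring
    rw [Int.floor_eq_iff]
    constructor
    · push_cast
      rw [hvp]; push_cast; linarith
    · rw [hvp]; push_cast; linarith
  funext i
  rw [Qmap_apply, hfn]
  rcases lt_trichotomy i (kk p u) with h1 | h1 | h1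
  · rw [if_pos h1]
    exact dig_lt_k hp2 hv0 hv1 hv2 h1
  · -- i = k
    rw [if_neg (by omega), if_pos h1]
    have hxne : digitsOf p u i ≠ p - 1 := by
      subst h1; exact dig_at_k hp2 (le_of_lt hu0) hk1 hk2
    have hxlt := digit_lt (p := p) (by omega) u i
    have hdu := digit_mod (p := p) u (le_of_lt hu0) i
    show (⌊gmap p u * (p:ℝ)^(i+1)⌋).toNat % p = _
    rw [key i (le_of_eq h1.symm)]
    have hilow : ((p:ℤ)^(kk p u+1) : ℤ) - p ≤ ⌊u * (p:ℝ)^(i+1)⌋ ∧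
        ⌊u * (p:ℝ)^(i+1)⌋ ≤ (p:ℤ)^(kk p u+1) - 2 := by
      subst h1; exact floor_at_k hp2 hk1 hk2
    have hexp1 : i + 1 - kk p u = 1 := by omega
    have hexp2 : i - kk p u = 0 := by omega
    rw [hexp1, hexp2]
    have hone : (1:ℤ) ≤ (p:ℤ)^(i+1) :=
      one_le_pow₀ (by exact_mod_cast Nat.one_le_cast.mpr (by omega) : (1:ℤ) ≤ (p:ℤ))
    apply toNat_mod_eq (by omega : 0 < p)
    · have hik : (p:ℤ)^(i+1) = (p:ℤ)^(kk p u + 1) := by rw [h1]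
      rw [← hik] at hilow
      have hge : (p:ℤ) ≤ (p:ℤ)^(i+1) :=
        le_self_pow₀ (by exact_mod_cast Nat.one_le_cast.mpr (by omega) : (1:ℤ) ≤ (p:ℤ)) (by omega)
      simp only [pow_one, pow_zero]
      omega
    · omega
    · have hc : ((p - 2 - digitsOf p u i : ℕ) : ℤ) = (p:ℤ) - 2 - digitsOf p u i := by
        omega
      rw [hc]
      simp only [pow_one, pow_zero]
      have hdvd2 : (p:ℤ) ∣ 2*(p:ℤ)^(i+1) := Dvd.dvd.mul_left (dvd_pow_self _ (by omega)) 2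
      have : 2*(p:ℤ)^(i+1) - (p:ℤ) - 1 - ⌊u * (p:ℝ)^(i+1)⌋ - 1 - ((p:ℤ) - 2 - digitsOf p u i)
          = 2*(p:ℤ)^(i+1) - 2*(p:ℤ) - (⌊u * (p:ℝ)^(i+1)⌋ - digitsOf p u i) := by ring
      rw [this]
      exact dvd_sub (dvd_sub hdvd2 (Dvd.dvd.mul_left dvd_rfl 2)) hdu
  · -- i > k
    rw [if_neg (by omega), if_neg (by omega)]
    have hxlt := digit_lt (p := p) (by omega) u i
    have hdu := digit_mod (p := p) u (le_of_lt hu0) i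
    show (⌊gmap p u * (p:ℝ)^(i+1)⌋).toNat % p = _
    rw [key i (by omega)]
    have hone : (1:ℤ) ≤ (p:ℤ)^(i+1) :=
      one_le_pow₀ (by exact_mod_cast Nat.one_le_cast.mpr (by omega) : (1:ℤ) ≤ (p:ℤ))
    have hone2 : (1:ℤ) ≤ (p:ℤ)^(i+1-kk p u) :=
      one_le_pow₀ (by exact_mod_cast Nat.one_le_cast.mpr (by omega) : (1:ℤ) ≤ (p:ℤ))
    have hone3 : (1:ℤ) ≤ (p:ℤ)^(i-kk p u) :=
      one_le_pow₀ (by exact_mod_cast Nat.one_le_cast.mpr (by omega) : (1:ℤ) ≤ (p:ℤ))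
    apply toNat_mod_eq (by omega : 0 < p)
    · have h0 : (0:ℤ) ≤ ⌊gmap p u * (p:ℝ)^(i+1)⌋ := Int.floor_nonneg.2 (by positivity)
      rw [key i (by omega)] at h0
      exact h0
    · omega
    · have hc : ((p - 1 - digitsOf p u i : ℕ) : ℤ) = (p:ℤ) - 1 - digitsOf p u i := by omega
      rw [hc]
      have hdvd2 : (p:ℤ) ∣ 2*(p:ℤ)^(i+1) := Dvd.dvd.mul_left (dvd_pow_self _ (by omega)) 2
      have hdvd3 : (p:ℤ) ∣ (p:ℤ)^(i+1-kk p u) := dvd_pow_self _ (by omega)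
      have hdvd4 : (p:ℤ) ∣ (p:ℤ)^(i-kk p u) := dvd_pow_self _ (by omega)
      have he : 2*(p:ℤ)^(i+1) - (p:ℤ)^(i+1-kk p u) - (p:ℤ)^(i-kk p u) - ⌊u * (p:ℝ)^(i+1)⌋ - 1
            - ((p:ℤ) - 1 - digitsOf p u i)
          = 2*(p:ℤ)^(i+1) - (p:ℤ)^(i+1-kk p u) - (p:ℤ)^(i-kk p u) - (p:ℤ)
            - (⌊u * (p:ℝ)^(i+1)⌋ - digitsOf p u i) := by ring
      rw [he]
      exact dvd_sub (dvd_sub (dvd_sub (dvd_sub hdvd2 hdvd3) hdvd4) dvd_rfl) hdu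


end Proofs4

section Proofs5
variable {p : ℕ}

section meas

lemma measurable_digitsOf : Measurable (digitsOf p) := by
  apply measurable_pi_lambda
  intro i
  exact (measurable_of_countable (fun z : ℤ => z.toNat % p)).comp
    (Int.measurable_floor.comp (measurable_id.mul_const _))

lemma measurable_firstNot : Measurable (firstNot p) := by
  apply measurable_to_countable'
  intro n
  have hA : ∀ c n : ℕ, MeasurableSet {x : ℕ → ℕ | x n = c} := fun c n => by
    have he : {x : ℕ → ℕ | x n = c} = (fun x : ℕ → ℕ => x n) ⁻¹' {c} := rfl
    rw [he]; exact (measurable_pi_apply n) (measurableSet_singleton c)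
  match n with
  | 0 =>
    have : firstNot p ⁻¹' {0} =
        {x : ℕ → ℕ | x 0 ≠ p - 1} ∪ ⋂ i, {x : ℕ → ℕ | x i = p - 1} := by
      ext x
      simp only [Set.mem_preimage, Set.mem_singleton_iff, Set.mem_union, Set.mem_iInter,
        Set.mem_setOf_eq]
      constructor
      · intro h
        by_cases hx : ∀ i, x i = p - 1
        · exact Or.inr hx
        · left
          push_neg at hx
          have hmem := Nat.sInf_mem (s := {i | x i ≠ p - 1}) hx
          rw [firstNot] at h
          rw [h] at hmem
          exact hmem
      · rintro (h | h)
        · exact Nat.eq_zero_of_le_zero (Nat.sInf_le h)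
        · have : {i | x i ≠ p - 1} = ∅ := by
            ext i; simp [h i]
          rw [firstNot, this, Nat.sInf_empty]
    rw [this]
    exact ((hA (p-1) 0).compl).union (MeasurableSet.iInter fun i => hA (p-1) i)
  | Nat.succ m =>
    have : firstNot p ⁻¹' {m + 1} =
        {x : ℕ → ℕ | x (m+1) ≠ p - 1} ∩ ⋂ i ∈ Set.Iio (m+1), {x : ℕ → ℕ | x i = p - 1} := by
      ext x
      simp only [Set.mem_preimage, Set.mem_singleton_iff, Set.mem_inter_iff, Set.mem_iInter,
        Set.mem_setOf_eq, Set.mem_Iio]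
      constructor
      · intro h
        have hne : {i | x i ≠ p - 1}.Nonempty := by
          by_contra hc
          rw [Set.not_nonempty_iff_eq_empty] at hc
          rw [firstNot, hc, Nat.sInf_empty] at h
          omega
        have h1 := Nat.sInf_mem hne
        rw [firstNot] at h
        rw [h] at h1
        refine ⟨h1, fun i hi => ?_⟩
        have := Nat.notMem_of_lt_sInf (by rw [h]; exact hi :
          i < sInf {i | x i ≠ p - 1})
        simpa using this
      · rintro ⟨h1, h2⟩
        exact firstNot_eq h1 h2
    rw [this]
    exact ((hA (p-1) (m+1)).compl).inter
      (MeasurableSet.biInter (Set.to_countable _) fun i _ => hA (p-1) i)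

lemma measurable_firstNotZero : Measurable (firstNotZero p) := by
  apply measurable_to_countable'
  intro n
  have hA : ∀ c n : ℕ, MeasurableSet {x : ℕ → ℕ | x n = c} := fun c n => by
    have he : {x : ℕ → ℕ | x n = c} = (fun x : ℕ → ℕ => x n) ⁻¹' {c} := rfl
    rw [he]; exact (measurable_pi_apply n) (measurableSet_singleton c)
  match n with
  | 0 =>
    have : firstNotZero p ⁻¹' {0} =
        {x : ℕ → ℕ | x 0 ≠ 0} ∪ ⋂ i, {x : ℕ → ℕ | x i = 0} := by
      ext x
      simp only [Set.mem_preimage, Set.mem_singleton_iff, Set.mem_union, Set.mem_iInter,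
        Set.mem_setOf_eq]
      constructor
      · intro h
        by_cases hx : ∀ i, x i = 0
        · exact Or.inr hx
        · left
          push_neg at hx
          have hmem := Nat.sInf_mem (s := {i | x i ≠ 0}) hx
          rw [firstNotZero] at h
          rw [h] at hmem
          exact hmem
      · rintro (h | h)
        · exact Nat.eq_zero_of_le_zero (Nat.sInf_le h)
        · have : {i | x i ≠ 0} = ∅ := by ext i; simp [h i]
          rw [firstNotZero, this, Nat.sInf_empty]
    rw [this]
    exact ((hA 0 0).compl).union (MeasurableSet.iInter fun i => hA 0 i)
  | Nat.succ m =>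
    have : firstNotZero p ⁻¹' {m + 1} =
        {x : ℕ → ℕ | x (m+1) ≠ 0} ∩ ⋂ i ∈ Set.Iio (m+1), {x : ℕ → ℕ | x i = 0} := by
      ext x
      simp only [Set.mem_preimage, Set.mem_singleton_iff, Set.mem_inter_iff, Set.mem_iInter,
        Set.mem_setOf_eq, Set.mem_Iio]
      constructor
      · intro h
        have hne : {i | x i ≠ 0}.Nonempty := by
          by_contra hc
          rw [Set.not_nonempty_iff_eq_empty] at hc
          rw [firstNotZero, hc, Nat.sInf_empty] at h
          omega
        have h1 := Nat.sInf_mem hne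
        rw [firstNotZero] at h
        rw [h] at h1
        refine ⟨h1, fun i hi => ?_⟩
        have := Nat.notMem_of_lt_sInf (by rw [h]; exact hi : i < sInf {i | x i ≠ 0})
        simpa using this
      · rintro ⟨h1, h2⟩
        have h3 : firstNotZero p x ≤ m + 1 := Nat.sInf_le h1
        rcases h3.lt_or_eq with h4 | h4
        · exact absurd (h2 _ h4) (Nat.sInf_mem (⟨m+1, h1⟩ : Set.Nonempty {i | x i ≠ 0}))
        · exact h4
    rw [this]
    exact ((hA 0 (m+1)).compl).inter
      (MeasurableSet.biInter (Set.to_countable _) fun i _ => hA 0 i)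

lemma measurable_evalFirst : Measurable (fun x : ℕ → ℕ => x (firstNot p x)) := by
  apply measurable_to_countable'
  intro v
  have : (fun x : ℕ → ℕ => x (firstNot p x)) ⁻¹' {v} =
      ⋃ n, (firstNot p ⁻¹' {n}) ∩ {x : ℕ → ℕ | x n = v} := by
    ext x
    simp only [Set.mem_preimage, Set.mem_singleton_iff, Set.mem_iUnion, Set.mem_inter_iff,
      Set.mem_setOf_eq]
    constructor
    · intro h; exact ⟨firstNot p x, rfl, h⟩
    · rintro ⟨n, h1, h2⟩; rw [h1]; exact h2
  rw [this]
  refine MeasurableSet.iUnion fun n =>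
    (measurable_firstNot (measurableSet_singleton n)).inter ?_
  have he : {x : ℕ → ℕ | x n = v} = (fun x : ℕ → ℕ => x n) ⁻¹' {v} := rfl
  rw [he]; exact (measurable_pi_apply n) (measurableSet_singleton v)

lemma measurable_odo : Measurable (odo p) := by
  apply measurable_pi_lambda
  intro i
  have : (fun x : ℕ → ℕ => odo p x i) =
      (fun q : ℕ × ℕ => if i < q.1 then 0 else if i = q.1 then q.2 + 1 else q.2) ∘
        (fun x => (firstNot p x, x i)) := rfl
  rw [this]
  exact (measurable_of_countable _).comp (measurable_firstNot.prodMk (measurable_pi_apply i))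

lemma measurable_odoInv : Measurable (odoInv p) := by
  apply measurable_pi_lambda
  intro i
  have : (fun x : ℕ → ℕ => odoInv p x i) =
      (fun q : ℕ × ℕ => if i < q.1 then p - 1 else if i = q.1 then q.2 - 1 else q.2) ∘
        (fun x => (firstNotZero p x, x i)) := rfl
  rw [this]
  exact (measurable_of_countable _).comp (measurable_firstNotZero.prodMk (measurable_pi_apply i))

lemma measurable_kk (hp : 2 ≤ p) : Measurable (kk p) := by
  apply measurable_to_countable'
  intro n
  match n with
  | 0 =>
    have : kk p ⁻¹' {0} = Set.Iio (aseq p 1) ∪ ⋂ j, {u : ℝ | aseq p (j+1) ≤ u} := by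
      ext u
      simp only [Set.mem_preimage, Set.mem_singleton_iff, Set.mem_union, Set.mem_iInter,
        Set.mem_setOf_eq, Set.mem_Iio]
      constructor
      · intro h
        by_cases hx : ∃ j, u < aseq p (j + 1)
        · left
          have hmem := Nat.sInf_mem (s := {k | u < aseq p (k+1)}) hx
          rw [kk] at h
          rw [h] at hmem
          exact hmem
        · right
          intro j
          push_neg at hx
          exact hx j
      · rintro (h | h)
        · exact Nat.eq_zero_of_le_zero (Nat.sInf_le h)
        · have : {k | u < aseq p (k+1)} = ∅ := by
            ext j; simp only [Set.mem_setOf_eq, Set.mem_empty_iff_false, iff_false, not_lt]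
            exact h j
          rw [kk, this, Nat.sInf_empty]
    rw [this]
    exact measurableSet_Iio.union (MeasurableSet.iInter fun j => measurableSet_Ici)
  | Nat.succ m =>
    have : kk p ⁻¹' {m+1} = Set.Ico (aseq p (m+1)) (aseq p (m+2)) := by
      ext u
      simp only [Set.mem_preimage, Set.mem_singleton_iff, Set.mem_Ico]
      constructor
      · intro h
        have hne : {k | u < aseq p (k+1)}.Nonempty := by
          by_contra hc
          rw [Set.not_nonempty_iff_eq_empty] at hc
          rw [kk, hc, Nat.sInf_empty] at h
          omega
        have h1 := Nat.sInf_mem hne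
        rw [kk] at h
        rw [h] at h1
        refine ⟨?_, h1⟩
        have h2 := Nat.notMem_of_lt_sInf (by omega : m < sInf {k | u < aseq p (k+1)})
        simpa using h2
      · rintro ⟨h1, h2⟩
        exact kk_eq hp h1 h2
    rw [this]
    exact measurableSet_Ico

lemma measurable_gmap (hp : 2 ≤ p) : Measurable (gmap p) := by
  have : gmap p = fun u => ((fun n : ℕ => aseq p n + aseq p (n+1)) ∘ kk p) u - u := by
    funext u; simp only [Function.comp_apply, gmap]
  rw [this]
  exact ((measurable_of_countable _).comp (measurable_kk hp)).sub measurable_id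

/-- `gmap` preserves Lebesgue measure on `[0,1)` -/
lemma map_gmap (hp : 2 ≤ p) :
    Measure.map (gmap p) (volume.restrict (Set.Ico (0:ℝ) 1)) =
      volume.restrict (Set.Ico (0:ℝ) 1) := by
  ext s hs
  rw [Measure.map_apply (measurable_gmap hp) hs, Measure.restrict_apply hs,
    Measure.restrict_apply (measurable_gmap hp hs)]
  have hIco : Set.Ico (0:ℝ) 1 = ⋃ k, Set.Ico (aseq p k) (aseq p (k+1)) := by
    ext u
    simp only [Set.mem_Ico, Set.mem_iUnion]
    constructor
    · intro ⟨h0, h1⟩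
      exact ⟨kk p u, (kk_mem_Ico hp h0 h1).1, (kk_mem_Ico hp h0 h1).2⟩
    · rintro ⟨k, h1, h2⟩
      exact ⟨le_trans (by simpa [aseq] using aseq_nonneg hp k) h1,
        lt_trans h2 (aseq_lt_one hp (k+1))⟩
  have hdisj : Pairwise (Function.onFun Disjoint fun k => Set.Ico (aseq p k) (aseq p (k+1))) := by
    intro j k hjk
    rcases hjk.lt_or_gt with h | h
    · apply Set.disjoint_left.2
      rintro u ⟨-, hu2⟩ ⟨hu3, -⟩
      exact absurd (lt_of_lt_of_le hu2 (aseq_mono hp (by omega))) (not_lt.2 hu3)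
    · apply Set.disjoint_left.2
      rintro u ⟨hu1, -⟩ ⟨-, hu4⟩
      exact absurd (lt_of_lt_of_le hu4 (aseq_mono hp (by omega))) (not_lt.2 hu1)
  rw [hIco, Set.inter_iUnion, Set.inter_iUnion,
    measure_iUnion (fun j k hjk => Disjoint.mono (Set.inter_subset_right)
      (Set.inter_subset_right) (hdisj hjk))
      (fun k => (measurable_gmap hp hs).inter measurableSet_Ico),
    measure_iUnion (fun j k hjk => Disjoint.mono (Set.inter_subset_right)
      (Set.inter_subset_right) (hdisj hjk))
      (fun k => hs.inter measurableSet_Ico)]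
  congr 1
  funext k
  -- on I_k, gmap is reflection u ↦ c - u
  have hstep1 : gmap p ⁻¹' s ∩ Set.Ico (aseq p k) (aseq p (k+1)) =
      (fun u => (aseq p k + aseq p (k+1)) - u) ⁻¹' s ∩ Set.Ico (aseq p k) (aseq p (k+1)) := by
    ext u
    simp only [Set.mem_inter_iff, Set.mem_preimage, Set.mem_Ico]
    constructor
    · rintro ⟨h1, h2, h3⟩
      have := kk_eq hp h2 h3
      refine ⟨?_, h2, h3⟩
      rwa [gmap, this] at h1
    · rintro ⟨h1, h2, h3⟩
      have := kk_eq hp h2 h3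
      refine ⟨?_, h2, h3⟩
      rwa [gmap, this]
  have hstep2 : (fun u => (aseq p k + aseq p (k+1)) - u) ⁻¹' s ∩
      Set.Ico (aseq p k) (aseq p (k+1)) =
      (fun u => (aseq p k + aseq p (k+1)) - u) ⁻¹'
        (s ∩ Set.Ioc (aseq p k) (aseq p (k+1))) := by
    ext u
    simp only [Set.mem_inter_iff, Set.mem_preimage, Set.mem_Ico, Set.mem_Ioc]
    constructor
    · rintro ⟨h1, h2, h3⟩
      exact ⟨h1, by linarith, by linarith⟩
    · rintro ⟨h1, h2, h3⟩
      exact ⟨h1, by linarith, by linarith⟩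
  rw [hstep1, hstep2,
    (Measure.measurePreserving_sub_left volume (aseq p k + aseq p (k+1))).measure_preimage
      ((hs.inter measurableSet_Ioc).nullMeasurableSet)]
  -- volume (s ∩ Ioc) = volume (s ∩ Ico)
  have h1 : (Set.Ioc (aseq p k) (aseq p (k+1)) : Set ℝ) =ᵐ[volume]
      Set.Ico (aseq p k) (aseq p (k+1)) := Ico_ae_eq_Ioc.symm
  exact measure_congr (Filter.EventuallyEq.inter (Filter.EventuallyEq.refl _ _) h1)

end meas

end Proofs5

section Proofs6
variable {p : ℕ}

lemma ae_good (hp : 2 ≤ p) :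
    ∀ᵐ u ∂(volume.restrict (Set.Ico (0:ℝ) 1)), Good p u := by
  rw [ae_iff, Measure.restrict_apply' measurableSet_Ico]
  apply measure_mono_null
    (t := ({0} : Set ℝ) ∪ ⋃ (n : ℕ), ⋃ (m : ℤ), {u : ℝ | u * (p:ℝ)^n = (m:ℝ)})
  · rintro u ⟨hbad, hu0, hu1⟩
    simp only [Set.mem_union, Set.mem_singleton_iff, Set.mem_iUnion, Set.mem_setOf_eq]
    rcases eq_or_lt_of_le hu0 with h | h
    · exact Or.inl h.symm
    · right
      unfold Good at hbad
      push_neg at hbad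
      obtain ⟨n, m, hm⟩ := hbad h hu1
      exact ⟨n, m, hm⟩
  · apply Set.Countable.measure_zero
    apply Set.Countable.union (Set.countable_singleton 0)
    apply Set.countable_iUnion
    intro n
    apply Set.countable_iUnion
    intro m
    apply Set.Subsingleton.countable
    intro u1 h1 u2 h2
    simp only [Set.mem_setOf_eq] at h1 h2
    have hpn : ((p:ℝ)^n) ≠ 0 := by positivity
    rw [← h2] at h1
    exact mul_right_cancel₀ hpn h1

lemma good_digits_mem (hp : 3 ≤ p) {u : ℝ} (hG : Good p u) :
    digitsOf p u ∈ GammaStarStar p := by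
  obtain ⟨hu0, hu1, hirr⟩ := hG
  have hp2 : 2 ≤ p := by omega
  refine ⟨fun i => digit_lt (by omega) u i, ?_, ?_⟩
  · by_contra hfin
    rw [Set.not_infinite] at hfin
    obtain ⟨N, hN⟩ := hfin.bddAbove
    apply not_all_pm1 hp2 u (le_of_lt hu0) (N+1)
    intro i hi
    by_contra hne
    have : i ∈ {i | digitsOf p u i ≠ p - 1} := hne
    have := hN this
    omega
  · by_contra hfin
    rw [Set.not_infinite] at hfin
    obtain ⟨N, hN⟩ := hfin.bddAbove
    have hz : ∀ i, N+1 ≤ i → digitsOf p u i = 0 := by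
      intro i hi
      by_contra hne
      have : i ∈ {i | digitsOf p u i ≠ 0} := hne
      have := hN this
      omega
    exact hirr (N+1) _ (all_zero_imp_int hp2 u (le_of_lt hu0) (N+1) hz)


end Proofs6

/-- if `ω` is antipalindromic with range `{0, …, ζ}`, then the maps
`x ↦ (φ_ω(S^j x))_{j ≥ 0}` and `x ↦ (ζ - φ_ω(S^{-j} x))_{j ≥ 0}` have the same
distribution: the pushforwards of `λ` under them are equal as measures on `ℤ^ℕ`. -/
theorem statement_1 (p : ℕ) (hp : 3 ≤ p) (ζ : ℕ) (ω : ℕ → ℕ)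
    (hω : Antipalindromic p ζ ω) :
    Measure.map (fun x : ℕ → ℕ => fun j : ℕ => (phiOmega p ω ((odo p)^[j] x) : ℤ))
        (lam p) =
      Measure.map
        (fun x : ℕ → ℕ => fun j : ℕ => (ζ : ℤ) - (phiOmega p ω ((odoInv p)^[j] x) : ℤ))
        (lam p) := by
  have hp2 : 2 ≤ p := by omega
  have hF1 : Measurable
      (fun x : ℕ → ℕ => fun j : ℕ => (phiOmega p ω ((odo p)^[j] x) : ℤ)) := by
    apply measurable_pi_lambda
    intro j
    have he : (fun x : ℕ → ℕ => (phiOmega p ω ((odo p)^[j] x) : ℤ)) =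
        (fun n : ℕ => (ω n : ℤ)) ∘ (fun y : ℕ → ℕ => y (firstNot p y)) ∘ (odo p)^[j] := rfl
    rw [he]
    exact (measurable_of_countable _).comp
      (measurable_evalFirst.comp (measurable_odo.iterate j))
  have hF2 : Measurable
      (fun x : ℕ → ℕ => fun j : ℕ => (ζ : ℤ) - (phiOmega p ω ((odoInv p)^[j] x) : ℤ)) := by
    apply measurable_pi_lambda
    intro j
    have he : (fun x : ℕ → ℕ => (ζ : ℤ) - (phiOmega p ω ((odoInv p)^[j] x) : ℤ)) =
        (fun n : ℕ => (ζ : ℤ) - (ω n : ℤ)) ∘ (fun y : ℕ → ℕ => y (firstNot p y)) ∘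
          (odoInv p)^[j] := rfl
    rw [he]
    exact (measurable_of_countable _).comp
      (measurable_evalFirst.comp (measurable_odoInv.iterate j))
  rw [lam, Measure.map_map hF1 measurable_digitsOf, Measure.map_map hF2 measurable_digitsOf]
  have hae : ((fun x : ℕ → ℕ => fun j : ℕ => (ζ : ℤ) -
        (phiOmega p ω ((odoInv p)^[j] x) : ℤ)) ∘ digitsOf p)
      =ᵐ[volume.restrict (Set.Ico (0:ℝ) 1)]
      (((fun x : ℕ → ℕ => fun j : ℕ => (phiOmega p ω ((odo p)^[j] x) : ℤ)) ∘ digitsOf p)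
        ∘ gmap p) := by
    filter_upwards [ae_good hp2] with u hG
    have hmem := good_digits_mem hp hG
    funext j
    show (ζ : ℤ) - (phiOmega p ω ((odoInv p)^[j] (digitsOf p u)) : ℤ) =
      (phiOmega p ω ((odo p)^[j] (digitsOf p (gmap p u))) : ℤ)
    rw [gmap_digits hp hG]
    exact (key_pointwise hp hω.2.2 hmem j).symm
  calc Measure.map ((fun x : ℕ → ℕ => fun j : ℕ =>
        (phiOmega p ω ((odo p)^[j] x) : ℤ)) ∘ digitsOf p)
        (volume.restrict (Set.Ico (0:ℝ) 1))
      = Measure.map ((fun x : ℕ → ℕ => fun j : ℕ =>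
          (phiOmega p ω ((odo p)^[j] x) : ℤ)) ∘ digitsOf p)
          (Measure.map (gmap p) (volume.restrict (Set.Ico (0:ℝ) 1))) := by
        rw [map_gmap hp2]
    _ = Measure.map (((fun x : ℕ → ℕ => fun j : ℕ =>
          (phiOmega p ω ((odo p)^[j] x) : ℤ)) ∘ digitsOf p) ∘ gmap p)
          (volume.restrict (Set.Ico (0:ℝ) 1)) :=
        Measure.map_map (hF1.comp measurable_digitsOf) (measurable_gmap hp2)
    _ = Measure.map ((fun x : ℕ → ℕ => fun j : ℕ =>
          (ζ : ℤ) - (phiOmega p ω ((odoInv p)^[j] x) : ℤ)) ∘ digitsOf p)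
          (volume.restrict (Set.Ico (0:ℝ) 1)) := (Measure.map_congr hae).symm


end Chacon
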